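/- If T is a σ-order continuous, order weakly compact positive operator on a real Banach lattice, then T is σ-order-to-norm continuous: x_n ↓ 0 implies ‖Tx_n‖ → 0. -/

import Mathlib

open scoped ENNReal

variable {X : Type*}

def IsPositiveOp [NormedAddCommGroup X] [Lattice X] [HasSolidNorm X] [IsOrderedAddMonoid X] [NormedSpace ℝ X]
    (T : X →L[ℝ] X) : Prop := ∀ x : X, 0 ≤ x → 0 ≤ T x

def IsClosedIdeal [NormedAddCommGroup X] [Lattice X] [HasSolidNorm X] [IsOrderedAddMonoid X] [NormedSpace ℝ X]
    (J : Submodule ℝ X) : Prop :=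
  IsClosed (J : Set X) ∧ ∀ x y : X, |y| ≤ |x| → x ∈ J → y ∈ J

def IdealIrreducible [NormedAddCommGroup X] [Lattice X] [HasSolidNorm X] [IsOrderedAddMonoid X] [NormedSpace ℝ X]
    (T : X →L[ℝ] X) : Prop :=
  ∀ J : Submodule ℝ X, IsClosedIdeal J → (∀ x ∈ J, T x ∈ J) → J = ⊥ ∨ J = ⊤

/-- A band: a solid submodule closed under existing suprema. -/
def IsBand [NormedAddCommGroup X] [Lattice X] [HasSolidNorm X] [IsOrderedAddMonoid X] [NormedSpace ℝ X]
    (J : Submodule ℝ X) : Prop :=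
  (∀ x y : X, |y| ≤ |x| → x ∈ J → y ∈ J) ∧
    ∀ (A : Set X) (x : X), A ⊆ (J : Set X) → IsLUB A x → x ∈ J

def BandIrreducible [NormedAddCommGroup X] [Lattice X] [HasSolidNorm X] [IsOrderedAddMonoid X] [NormedSpace ℝ X]
    (T : X →L[ℝ] X) : Prop :=
  ∀ J : Submodule ℝ X, IsBand J → (∀ x ∈ J, T x ∈ J) → J = ⊥ ∨ J = ⊤

def QuasiInterior [NormedAddCommGroup X] [Lattice X] [HasSolidNorm X] [IsOrderedAddMonoid X] [NormedSpace ℝ X]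
    (x : X) : Prop :=
  closure {y : X | ∃ c : ℝ, |y| ≤ c • x} = Set.univ

/-- A weak (order) unit. -/
def WeakUnit [NormedAddCommGroup X] [Lattice X] [HasSolidNorm X] [IsOrderedAddMonoid X] [NormedSpace ℝ X]
    (x : X) : Prop := 0 < x ∧ ∀ y : X, |y| ⊓ x = 0 → y = 0

def IsPositiveFunc [NormedAddCommGroup X] [Lattice X] [HasSolidNorm X] [IsOrderedAddMonoid X] [NormedSpace ℝ X]
    (f : StrongDual ℝ X) : Prop := ∀ x : X, 0 ≤ x → 0 ≤ f x

def StrictlyPositiveFunc [NormedAddCommGroup X] [Lattice X] [HasSolidNorm X] [IsOrderedAddMonoid X] [NormedSpace ℝ X]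
    (f : StrongDual ℝ X) : Prop := ∀ x : X, 0 < x → 0 < f x

noncomputable def adjOp [NormedAddCommGroup X] [Lattice X] [HasSolidNorm X] [IsOrderedAddMonoid X] [NormedSpace ℝ X]
    (T : X →L[ℝ] X) : StrongDual ℝ X →L[ℝ] StrongDual ℝ X :=
  (ContinuousLinearMap.compL ℝ X X ℝ).flip T

/-- `T` is σ-order continuous: `x_n ↓ 0` implies `T x_n ↓ 0`. -/
def SigmaOrderContinuousOp [NormedAddCommGroup X] [Lattice X] [HasSolidNorm X] [IsOrderedAddMonoid X] [NormedSpace ℝ X]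
    (T : X →L[ℝ] X) : Prop :=
  ∀ u : ℕ → X, Antitone u → IsGLB (Set.range u) 0 →
    IsGLB (Set.range fun n => T (u n)) 0

/-- A σ-order continuous functional. -/
def SigmaOrderContinuousFunc [NormedAddCommGroup X] [Lattice X] [HasSolidNorm X] [IsOrderedAddMonoid X] [NormedSpace ℝ X]
    (f : StrongDual ℝ X) : Prop :=
  ∀ u : ℕ → X, Antitone u → IsGLB (Set.range u) 0 →
    Filter.Tendsto (fun n => f (u n)) Filter.atTop (nhds 0)

/-- A set is relatively weakly compact. -/
def RelWeaklyCompact [NormedAddCommGroup X] [Lattice X] [HasSolidNorm X] [IsOrderedAddMonoid X] [NormedSpace ℝ X]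
    (s : Set X) : Prop :=
  IsCompact (closure ((toWeakSpace ℝ X) '' s))

/-- `T` is order weakly compact: `T[0,x]` is relatively weakly compact for all `x > 0`. -/
def OrderWeaklyCompactOp [NormedAddCommGroup X] [Lattice X] [HasSolidNorm X] [IsOrderedAddMonoid X] [NormedSpace ℝ X]
    (T : X →L[ℝ] X) : Prop :=
  ∀ x : X, 0 < x → RelWeaklyCompact (T '' Set.Icc 0 x)


section AuxLemmas
variable {X : Type*} [NormedAddCommGroup X] [Lattice X] [HasSolidNorm X] [IsOrderedAddMonoid X] [NormedSpace ℝ X]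

lemma aux_nonneg_of_add_self {y : X} (h : 0 ≤ y + y) : 0 ≤ y := by
  have hneg : -y ≤ y := by rwa [← sub_nonneg, sub_neg_eq_add]
  have h1 : negPart y ≤ posPart y := by
    rw [negPart_def]
    exact sup_le (hneg.trans (le_posPart y)) (posPart_nonneg y)
  have h2 : negPart y = 0 := by
    have h3 := posPart_inf_negPart_eq_zero y
    rwa [inf_eq_right.mpr h1] at h3
  exact negPart_eq_zero.mp h2

lemma aux_smul_nonneg {c : ℝ} (hc : 0 ≤ c) {x : X} (hx : 0 ≤ x) : 0 ≤ c • x := by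
  have hdy : ∀ k m : ℕ, 0 ≤ ((m : ℝ) / 2 ^ k) • x := by
    intro k
    induction k with
    | zero =>
      intro m
      simpa [Nat.cast_smul_eq_nsmul] using nsmul_nonneg hx m
    | succ k ih =>
      intro m
      apply aux_nonneg_of_add_self
      have h2 : ((m : ℝ) / 2 ^ (k + 1)) • x + ((m : ℝ) / 2 ^ (k + 1)) • x
          = ((m : ℝ) / 2 ^ k) • x := by
        rw [← add_smul]
        congr 1
        field_simp
        ring
      rw [h2]
      exact ih m
  set q : ℕ → ℝ := fun k => (⌊c * 2 ^ k⌋₊ : ℝ) / 2 ^ k with hq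
  have key : ∀ k, c - (1 / 2 : ℝ) ^ k ≤ q k ∧ q k ≤ c := by
    intro k
    have h2k : (0 : ℝ) < 2 ^ k := by positivity
    constructor
    · rw [hq, le_div_iff₀ h2k]
      have h1 : c * 2 ^ k < (⌊c * 2 ^ k⌋₊ : ℝ) + 1 := Nat.lt_floor_add_one _
      have h3 : ((1 : ℝ) / 2) ^ k * 2 ^ k = 1 := by
        rw [div_pow, one_pow, div_mul_cancel₀]
        positivity
      rw [sub_mul, h3]
      linarith
    · rw [hq, div_le_iff₀ h2k]
      exact Nat.floor_le (mul_nonneg hc h2k.le)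
  have hq_tendsto : Filter.Tendsto q Filter.atTop (nhds c) := by
    have hpow : Filter.Tendsto (fun k : ℕ => ((1 : ℝ) / 2) ^ k) Filter.atTop (nhds 0) :=
      tendsto_pow_atTop_nhds_zero_of_lt_one (by norm_num) (by norm_num)
    have hl : Filter.Tendsto (fun k : ℕ => c - ((1 : ℝ) / 2) ^ k) Filter.atTop (nhds c) := by
      simpa using tendsto_const_nhds.sub hpow
    exact tendsto_of_tendsto_of_tendsto_of_le_of_le hl tendsto_const_nhds
      (fun k => (key k).1) (fun k => (key k).2)
  have hsm : Filter.Tendsto (fun k => q k • x) Filter.atTop (nhds (c • x)) :=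
    hq_tendsto.smul tendsto_const_nhds
  exact isClosed_nonneg.mem_of_tendsto hsm
    (Filter.Eventually.of_forall fun k => hdy k _)

lemma aux_smul_le_smul {c : ℝ} (hc : 0 ≤ c) {x y : X} (h : x ≤ y) : c • x ≤ c • y := by
  have h1 := aux_smul_nonneg hc (sub_nonneg.mpr h)
  rwa [smul_sub, sub_nonneg] at h1

lemma aux_orderedSMul : PosSMulMono ℝ X :=
  ⟨fun _ ha _ _ h => aux_smul_le_smul ha h⟩

end AuxLemmas

open Filter in
theorem stmt10 [NormedAddCommGroup X] [Lattice X] [HasSolidNorm X] [IsOrderedAddMonoid X] [NormedSpace ℝ X]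
    (T : X →L[ℝ] X) (hT : IsPositiveOp T)
    (hoc : SigmaOrderContinuousOp T) (howc : OrderWeaklyCompactOp T) :
    ∀ u : ℕ → X, Antitone u → IsGLB (Set.range u) 0 →
      Tendsto (fun n => ‖T (u n)‖) atTop (nhds 0) := by
  intro u hu hglb
  haveI : PosSMulMono ℝ X := aux_orderedSMul
  have hlb : ∀ n, 0 ≤ u n := fun n => hglb.1 ⟨n, rfl⟩
  set y : ℕ → X := fun n => T (u n) with hy
  have hTmono : ∀ {a b : X}, a ≤ b → T a ≤ T b := by
    intro a b h
    have h1 := hT _ (sub_nonneg.mpr h)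
    rw [map_sub] at h1
    exact sub_nonneg.mp h1
  have hy0 : ∀ n, 0 ≤ y n := fun n => hT _ (hlb n)
  have hya : Antitone y := fun m n hmn => hTmono (hu hmn)
  have hglby : IsGLB (Set.range y) 0 := hoc u hu hglb
  rcases eq_or_lt_of_le (hlb 0) with h0 | h0
  · have hun : ∀ n, u n = 0 := fun n => le_antisymm (h0 ▸ hu (Nat.zero_le n)) (hlb n)
    simp only [hun, map_zero, norm_zero]
    exact tendsto_const_nhds
  · have hK := howc (u 0) h0
    set w : ℕ → WeakSpace ℝ X := fun n => toWeakSpace ℝ X (y n) with hw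
    have hwK : ∀ n, w n ∈ closure (toWeakSpace ℝ X '' (T '' Set.Icc 0 (u 0))) :=
      fun n => subset_closure ⟨T (u n), ⟨u n, ⟨hlb n, hu (Nat.zero_le n)⟩, rfl⟩, rfl⟩
    obtain ⟨z, hzK, hz⟩ := hK.exists_clusterPt (f := Filter.map w Filter.atTop)
      (le_principal_iff.mpr (Filter.mem_map.mpr
        (Filter.Eventually.of_forall hwK)))
    have hmemcl : ∀ s : Set (WeakSpace ℝ X), (∀ᶠ n in atTop, w n ∈ s) → z ∈ closure s := by
      intro s hs
      exact mem_closure_iff_clusterPt.mpr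
        (hz.mono (le_principal_iff.mpr (Filter.mem_map.mpr hs)))
    have himg : ∀ s : Set X, Convex ℝ s → IsClosed s →
        closure (toWeakSpace ℝ X '' s) = toWeakSpace ℝ X '' s := by
      intro s hconv hcl
      rw [← hconv.toWeakSpace_closure (𝕜 := ℝ), hcl.closure_eq]
    have hbound : ∀ m, (toWeakSpace ℝ X).symm z ∈ Set.Icc 0 (y m) := by
      intro m
      have hcl : z ∈ closure (toWeakSpace ℝ X '' Set.Icc 0 (y m)) :=
        hmemcl _ (Filter.eventually_atTop.mpr ⟨m, fun n hn => ⟨y n, ⟨hy0 n, hya hn⟩, rfl⟩⟩)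
      rw [himg _ (convex_Icc 0 (y m)) isClosed_Icc] at hcl
      obtain ⟨x', hx', hx'z⟩ := hcl
      rwa [← hx'z, LinearEquiv.symm_apply_apply]
    have hx00 : (toWeakSpace ℝ X).symm z = 0 := by
      have hlow : (toWeakSpace ℝ X).symm z ∈ lowerBounds (Set.range y) := by
        rintro _ ⟨m, rfl⟩
        exact (hbound m).2
      exact le_antisymm (hglby.2 hlow) (hbound 0).1
    rw [Metric.tendsto_atTop]
    intro ε hε
    have hC : (0 : X) ∈ closure (convexHull ℝ (Set.range y)) := by
      have h1 : z ∈ closure (toWeakSpace ℝ X '' convexHull ℝ (Set.range y)) :=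
        hmemcl _ (Filter.Eventually.of_forall fun n =>
          ⟨y n, subset_convexHull ℝ _ ⟨n, rfl⟩, rfl⟩)
      rw [← (convex_convexHull ℝ (Set.range y)).toWeakSpace_closure (𝕜 := ℝ)] at h1
      obtain ⟨x', hx', hxz⟩ := h1
      have hx'e : x' = (toWeakSpace ℝ X).symm z := by
        rw [← hxz, LinearEquiv.symm_apply_apply]
      rwa [hx'e, hx00] at hx'
    obtain ⟨v, hvC, hv⟩ := Metric.mem_closure_iff.mp hC ε hε
    have hCset : convexHull ℝ (Set.range y) ⊆ {v : X | ∃ n, y n ≤ v} := by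
      apply convexHull_min
      · rintro _ ⟨n, rfl⟩
        exact ⟨n, le_refl _⟩
      · rintro v1 ⟨n1, h1⟩ v2 ⟨n2, h2⟩ a b ha hb hab
        refine ⟨max n1 n2, ?_⟩
        have e1 : y (max n1 n2) ≤ v1 := (hya (le_max_left n1 n2)).trans h1
        have e2 : y (max n1 n2) ≤ v2 := (hya (le_max_right n1 n2)).trans h2
        calc y (max n1 n2) = a • y (max n1 n2) + b • y (max n1 n2) := by
              rw [← add_smul, hab, one_smul]
          _ ≤ a • v1 + b • v2 :=
              add_le_add (aux_smul_le_smul ha e1) (aux_smul_le_smul hb e2)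
    obtain ⟨N, hN⟩ := hCset hvC
    refine ⟨N, fun n hn => ?_⟩
    have hle : y n ≤ v := (hya hn).trans hN
    have habs : |y n| ≤ |v| := by
      rw [abs_of_nonneg (hy0 n), abs_of_nonneg ((hy0 n).trans hle)]
      exact hle
    have hnorm : ‖y n‖ ≤ ‖v‖ := norm_le_norm_of_abs_le_abs habs
    have hvnorm : ‖v‖ < ε := by rwa [dist_zero_left] at hv
    rw [Real.dist_0_eq_abs, abs_of_nonneg (norm_nonneg _)]
    exact lt_of_le_of_lt hnorm hvnorm
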